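/- Let q : ℝ → ℝ be continuous on [0,1] and α, β, γ ∈ ℝ with sin(β − γ) ≠ 0. For i ∈ {1,2} and n ∈ ℕ, let λ_{i,n} ∈ ℝ, with n ↦ λ_{1,n} and n ↦ λ_{2,n} injective, and let g_{i,n} : ℝ → ℝ be twice continuously differentiable, not identically zero on [0,1], satisfying −g_{i,n}'' + q g_{i,n} = λ_{i,n} g_{i,n} on [0,1], ∫₀¹ g_{i,n}² = 1, the boundary condition g_{i,n}(0)cos α + g_{i,n}'(0)sin α = 0 at 0, and at 1 the condition g_{1,n}(1)cos β + g_{1,n}'(1)sin β = 0 for i = 1 and g_{2,n}(1)cos γ + g_{2,n}'(1)sin γ = 0 for i = 2. Then the family of squared eigenfunctions { g_{i,n}² : (i,n) ∈ {1,2} × ℕ } is linearly independent: for every finite set F ⊆ {1,2} × ℕ and reals a_{i,n}, if Σ_{(i,n)∈F} a_{i,n} g_{i,n}(x)² = 0 for all x ∈ [0,1], then a_{i,n} = 0 for all (i,n) ∈ F. -/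

import Mathlib

open Real Set Filter Finset Topology

/-- Two continuous functions on `[0,1]` that agree on `(0,1)` agree on `[0,1]`. -/
private lemma eqOn_Icc_of_eqOn_Ioo {φ ψ : ℝ → ℝ}
    (hφ : ContinuousOn φ (Set.Icc 0 1)) (hψ : ContinuousOn ψ (Set.Icc 0 1))
    (h : ∀ x ∈ Set.Ioo (0:ℝ) 1, φ x = ψ x) :
    ∀ x ∈ Set.Icc (0:ℝ) 1, φ x = ψ x := by
  intro x hx
  have hcl : closure (Set.Ioo (0:ℝ) 1) = Set.Icc 0 1 := closure_Ioo (by norm_num : (0:ℝ) ≠ 1)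
  have hxcl : x ∈ closure (Set.Ioo (0:ℝ) 1) := by rw [hcl]; exact hx
  have hne : (𝓝[Set.Ioo (0:ℝ) 1] x).NeBot := mem_closure_iff_nhdsWithin_neBot.1 hxcl
  have h1 : Filter.Tendsto φ (𝓝[Set.Ioo (0:ℝ) 1] x) (𝓝 (φ x)) :=
    (hφ x hx).mono Set.Ioo_subset_Icc_self
  have h2 : Filter.Tendsto ψ (𝓝[Set.Ioo (0:ℝ) 1] x) (𝓝 (ψ x)) :=
    (hψ x hx).mono Set.Ioo_subset_Icc_self
  have h3 : Filter.Tendsto φ (𝓝[Set.Ioo (0:ℝ) 1] x) (𝓝 (ψ x)) := by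
    refine h2.congr' ?_
    filter_upwards [self_mem_nhdsWithin] with y hy using (h y hy).symm
  exact tendsto_nhds_unique h1 h3

/-- A solution of `-w'' + q w = λ w` on `[0,1]` with `w 1 = w' 1 = 0` vanishes on `[0,1]`. -/
private lemma zero_of_ode {q : ℝ → ℝ} (hq : ContinuousOn q (Set.Icc 0 1)) (lam : ℝ)
    {w w' w'' : ℝ → ℝ}
    (hd : ∀ x ∈ Set.Icc (0:ℝ) 1, HasDerivAt w (w' x) x ∧ HasDerivAt w' (w'' x) x)
    (hode : ∀ x ∈ Set.Icc (0:ℝ) 1, w'' x = (q x - lam) * w x)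
    (h1 : w 1 = 0) (h1' : w' 1 = 0) :
    ∀ x ∈ Set.Icc (0:ℝ) 1, w x = 0 := by
  obtain ⟨M, hM⟩ : ∃ M, ∀ y ∈ Set.Icc (0:ℝ) 1, |q y - lam| ≤ M := by
    obtain ⟨M, hM⟩ := IsCompact.exists_bound_of_continuousOn isCompact_Icc
      (hq.sub continuousOn_const (g := fun _ => lam))
    exact ⟨M, fun y hy => by simpa [Real.norm_eq_abs] using hM y hy⟩
  set K : ℝ := max 1 M with hK
  have hK1 : (1:ℝ) ≤ K := le_max_left _ _
  have hKM : M ≤ K := le_max_right _ _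
  set Z : ℝ → ℝ × ℝ := fun t => (w (1 - t), w' (1 - t)) with hZdef
  set Z' : ℝ → ℝ × ℝ := fun t => (-w' (1 - t), -w'' (1 - t)) with hZ'def
  have hmap : ∀ t ∈ Set.Icc (0:ℝ) 1, (1 - t) ∈ Set.Icc (0:ℝ) 1 := by
    intro t ht
    exact ⟨by linarith [ht.2], by linarith [ht.1]⟩
  have hZd : ∀ t ∈ Set.Icc (0:ℝ) 1, HasDerivAt Z (Z' t) t := by
    intro t ht
    have hs := hmap t ht
    have hlin : HasDerivAt (fun t : ℝ => 1 - t) (-1) t := by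
      simpa using (hasDerivAt_const t (1:ℝ)).fun_sub (hasDerivAt_id t)
    have h1 : HasDerivAt (fun t => w (1 - t)) (w' (1-t) * (-1)) t :=
      (hd _ hs).1.comp t hlin
    have h2 : HasDerivAt (fun t => w' (1 - t)) (w'' (1-t) * (-1)) t :=
      (hd _ hs).2.comp t hlin
    have e : ((w' (1-t) * -1, w'' (1-t) * -1) : ℝ × ℝ) = Z' t := by
      simp [hZ'def, Prod.ext_iff]
    exact e ▸ h1.prodMk h2
  have hcont : ContinuousOn Z (Set.Icc 0 1) :=
    fun t ht => ((hZd t ht).continuousAt).continuousWithinAt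
  have hZ1 : ‖Z 0‖ ≤ 0 := by
    simp only [hZdef, sub_zero, h1, h1']
    simp [Prod.norm_def]
  have hbound : ∀ t ∈ Set.Ico (0:ℝ) 1, ‖Z' t‖ ≤ K * ‖Z t‖ + 0 := by
    intro t ht
    have hs := hmap t (Set.Ico_subset_Icc_self ht)
    rw [add_zero]
    have hnn : (0:ℝ) ≤ ‖Z t‖ := norm_nonneg _
    have hw : |w (1 - t)| ≤ ‖Z t‖ := by
      rw [hZdef]; simp only [Prod.norm_def, Real.norm_eq_abs]; exact le_max_left _ _
    have hw' : |w' (1 - t)| ≤ ‖Z t‖ := by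
      rw [hZdef]; simp only [Prod.norm_def, Real.norm_eq_abs]; exact le_max_right _ _
    have hZ't : ‖Z' t‖ = max |w' (1 - t)| |w'' (1 - t)| := by
      rw [hZ'def]; simp [Prod.norm_def]
    rw [hZ't]
    apply max_le
    · calc |w' (1 - t)| ≤ ‖Z t‖ := hw'
        _ ≤ K * ‖Z t‖ := le_mul_of_one_le_left hnn hK1
    · calc |w'' (1 - t)| = |q (1 - t) - lam| * |w (1 - t)| := by
            rw [hode _ hs, abs_mul]
        _ ≤ K * ‖Z t‖ :=
            mul_le_mul (le_trans (hM _ hs) hKM) hw (abs_nonneg _)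
              (le_trans zero_le_one hK1)
  have hmain := norm_le_gronwallBound_of_norm_deriv_right_le hcont
    (fun t ht => (hZd t (Set.Ico_subset_Icc_self ht)).hasDerivWithinAt) hZ1 hbound
  intro x hx
  have hxt : (1 - x) ∈ Set.Icc (0:ℝ) 1 := hmap x hx
  have := hmain (1 - x) hxt
  rw [gronwallBound_ε0_δ0] at this
  have hz : Z (1 - x) = 0 := norm_le_zero_iff.1 this
  have : w (1 - (1 - x)) = 0 := congrArg Prod.fst hz
  simpa using this

/-- Eigenvalues of the two boundary value problems are distinct. -/
private lemma distinct_lam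
    (q : ℝ → ℝ) (hq : ContinuousOn q (Set.Icc (0:ℝ) 1))
    (α β γ : ℝ) (hβγ : Real.sin (β - γ) ≠ 0)
    (lam : ℕ → ℕ → ℝ)
    (g g' g'' : ℕ → ℕ → ℝ → ℝ)
    (hg : ∀ i ∈ ({1, 2} : Set ℕ), ∀ n : ℕ, ∀ x ∈ Set.Icc (0:ℝ) 1,
      HasDerivAt (g i n) (g' i n x) x ∧ HasDerivAt (g' i n) (g'' i n x) x)
    (hne : ∀ i ∈ ({1, 2} : Set ℕ), ∀ n : ℕ, ∃ x ∈ Set.Icc (0:ℝ) 1, g i n x ≠ 0)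
    (heq : ∀ i ∈ ({1, 2} : Set ℕ), ∀ n : ℕ, ∀ x ∈ Set.Icc (0:ℝ) 1,
      -g'' i n x + q x * g i n x = lam i n * g i n x)
    (hbc0 : ∀ i ∈ ({1, 2} : Set ℕ), ∀ n : ℕ,
      g i n 0 * Real.cos α + g' i n 0 * Real.sin α = 0)
    (hbc1β : ∀ n : ℕ, g 1 n 1 * Real.cos β + g' 1 n 1 * Real.sin β = 0)
    (hbc1γ : ∀ n : ℕ, g 2 n 1 * Real.cos γ + g' 2 n 1 * Real.sin γ = 0)
    (n m : ℕ) : lam 1 n ≠ lam 2 m := by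
  intro hlam
  have h1 : (1:ℕ) ∈ ({1, 2} : Set ℕ) := by simp
  have h2 : (2:ℕ) ∈ ({1, 2} : Set ℕ) := by simp
  -- the Wronskian is constant
  set W : ℝ → ℝ := fun y => g 1 n y * g' 2 m y - g' 1 n y * g 2 m y with hWdef
  have hWd : ∀ x ∈ Set.Icc (0:ℝ) 1, HasDerivAt W 0 x := by
    intro x hx
    have d1 := (hg 1 h1 n x hx).1
    have d1' := (hg 1 h1 n x hx).2
    have d2 := (hg 2 h2 m x hx).1
    have d2' := (hg 2 h2 m x hx).2
    have hD := (d1.fun_mul d2').fun_sub (d1'.fun_mul d2)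
    have e1 : g'' 1 n x = q x * g 1 n x - lam 1 n * g 1 n x := by
      have := heq 1 h1 n x hx; linarith
    have e2 : g'' 2 m x = q x * g 2 m x - lam 2 m * g 2 m x := by
      have := heq 2 h2 m x hx; linarith
    refine hD.congr_deriv ?_
    rw [e1, e2, ← hlam]; ring
  have hWcont : ContinuousOn W (Set.Icc 0 1) :=
    fun x hx => ((hWd x hx).continuousAt).continuousWithinAt
  have hWconst := constant_of_has_deriv_right_zero hWcont
    (fun x hx => (hWd x (Set.Ico_subset_Icc_self hx)).hasDerivWithinAt)
  have hW0 : W 0 = 0 := by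
    have b1 := hbc0 1 h1 n
    have b2 := hbc0 2 h2 m
    have hs : (g 1 n 0 * g' 2 m 0 - g' 1 n 0 * g 2 m 0) * Real.sin α = 0 := by
      linear_combination g 1 n 0 * b2 - g 2 m 0 * b1
    have hc : (g 1 n 0 * g' 2 m 0 - g' 1 n 0 * g 2 m 0) * Real.cos α = 0 := by
      linear_combination g' 2 m 0 * b1 - g' 1 n 0 * b2
    show g 1 n 0 * g' 2 m 0 - g' 1 n 0 * g 2 m 0 = 0
    linear_combination Real.sin α * hs + Real.cos α * hc
      - (g 1 n 0 * g' 2 m 0 - g' 1 n 0 * g 2 m 0) * Real.sin_sq_add_cos_sq α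
  have hW1 : g 1 n 1 * g' 2 m 1 - g' 1 n 1 * g 2 m 1 = 0 := by
    have := hWconst 1 (by constructor <;> norm_num)
    rw [hW0] at this
    exact this
  -- boundary structure at 1
  set S : ℝ := g 1 n 1 * Real.sin β - g' 1 n 1 * Real.cos β with hSdef
  set T : ℝ := g 2 m 1 * Real.sin γ - g' 2 m 1 * Real.cos γ with hTdef
  have hb1 := hbc1β n
  have hb2 := hbc1γ m
  have hu1 : g 1 n 1 = S * Real.sin β := by
    rw [hSdef]
    linear_combination Real.cos β * hb1 - g 1 n 1 * Real.sin_sq_add_cos_sq β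
  have hu1' : g' 1 n 1 = -S * Real.cos β := by
    rw [hSdef]
    linear_combination Real.sin β * hb1 - g' 1 n 1 * Real.sin_sq_add_cos_sq β
  have hv1 : g 2 m 1 = T * Real.sin γ := by
    rw [hTdef]
    linear_combination Real.cos γ * hb2 - g 2 m 1 * Real.sin_sq_add_cos_sq γ
  have hv1' : g' 2 m 1 = -T * Real.cos γ := by
    rw [hTdef]
    linear_combination Real.sin γ * hb2 - g' 2 m 1 * Real.sin_sq_add_cos_sq γ
  have hST : S * T * Real.sin (β - γ) = 0 := by
    rw [Real.sin_sub]
    rw [hu1, hu1', hv1, hv1'] at hW1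
    linear_combination -hW1
  have hST0 : S * T = 0 := by
    rcases mul_eq_zero.1 hST with h | h
    · exact h
    · exact absurd h hβγ
  rcases mul_eq_zero.1 hST0 with hS | hT
  · have hz1 : g 1 n 1 = 0 := by rw [hu1, hS, zero_mul]
    have hz1' : g' 1 n 1 = 0 := by rw [hu1', hS]; ring
    have hodeu : ∀ x ∈ Set.Icc (0:ℝ) 1, g'' 1 n x = (q x - lam 1 n) * g 1 n x := by
      intro x hx; have := heq 1 h1 n x hx; linarith
    have hzero := zero_of_ode hq (lam 1 n) (fun x hx => hg 1 h1 n x hx) hodeu hz1 hz1'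
    obtain ⟨x₀, hx₀, hnz⟩ := hne 1 h1 n
    exact hnz (hzero x₀ hx₀)
  · have hz1 : g 2 m 1 = 0 := by rw [hv1, hT, zero_mul]
    have hz1' : g' 2 m 1 = 0 := by rw [hv1', hT]; ring
    have hodev : ∀ x ∈ Set.Icc (0:ℝ) 1, g'' 2 m x = (q x - lam 2 m) * g 2 m x := by
      intro x hx; have := heq 2 h2 m x hx; linarith
    have hzero := zero_of_ode hq (lam 2 m) (fun x hx => hg 2 h2 m x hx) hodev hz1 hz1'
    obtain ⟨x₀, hx₀, hnz⟩ := hne 2 h2 m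
    exact hnz (hzero x₀ hx₀)

/-- If `∑ a_p g_p²` vanishes on `[0,1]`, so does `∑ a_p λ_p g_p²`. -/
private lemma chain_lemma
    (q : ℝ → ℝ) (α : ℝ) (lam : ℕ → ℕ → ℝ)
    (g g' g'' : ℕ → ℕ → ℝ → ℝ)
    (hg : ∀ i ∈ ({1, 2} : Set ℕ), ∀ n : ℕ, ∀ x ∈ Set.Icc (0:ℝ) 1,
      HasDerivAt (g i n) (g' i n x) x ∧ HasDerivAt (g' i n) (g'' i n x) x)
    (heq : ∀ i ∈ ({1, 2} : Set ℕ), ∀ n : ℕ, ∀ x ∈ Set.Icc (0:ℝ) 1,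
      -g'' i n x + q x * g i n x = lam i n * g i n x)
    (hbc0 : ∀ i ∈ ({1, 2} : Set ℕ), ∀ n : ℕ,
      g i n 0 * Real.cos α + g' i n 0 * Real.sin α = 0)
    (F : Finset (ℕ × ℕ)) (hF : ∀ p ∈ F, p.1 ∈ ({1, 2} : Set ℕ))
    (a : ℕ × ℕ → ℝ)
    (h0 : ∀ x ∈ Set.Icc (0:ℝ) 1, ∑ p ∈ F, a p * (g p.1 p.2 x)^2 = 0) :
    ∀ x ∈ Set.Icc (0:ℝ) 1, ∑ p ∈ F, (a p * lam p.1 p.2) * (g p.1 p.2 x)^2 = 0 := by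
  classical
  have hgd : ∀ p ∈ F, ∀ x ∈ Set.Icc (0:ℝ) 1, HasDerivAt (g p.1 p.2) (g' p.1 p.2 x) x :=
    fun p hp x hx => (hg p.1 (hF p hp) p.2 x hx).1
  have hgd' : ∀ p ∈ F, ∀ x ∈ Set.Icc (0:ℝ) 1, HasDerivAt (g' p.1 p.2) (g'' p.1 p.2 x) x :=
    fun p hp x hx => (hg p.1 (hF p hp) p.2 x hx).2
  have hode : ∀ p ∈ F, ∀ x ∈ Set.Icc (0:ℝ) 1,
      g'' p.1 p.2 x = q x * g p.1 p.2 x - lam p.1 p.2 * g p.1 p.2 x := by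
    intro p hp x hx; have := heq p.1 (hF p hp) p.2 x hx; linarith
  -- derivative of ∑ c p * g², for any coefficients c
  have dA : ∀ (c : ℕ × ℕ → ℝ), ∀ x ∈ Set.Icc (0:ℝ) 1,
      HasDerivAt (fun y => ∑ p ∈ F, c p * (g p.1 p.2 y)^2)
        (∑ p ∈ F, c p * (2 * (g p.1 p.2 x * g' p.1 p.2 x))) x := by
    intro c x hx
    apply HasDerivAt.fun_sum
    intro p hp
    have h2 : HasDerivAt (fun y => (g p.1 p.2 y)^2)
        (2 * (g p.1 p.2 x * g' p.1 p.2 x)) x := by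
      have := (hgd p hp x hx).pow 2
      refine this.congr_deriv ?_
      push_cast
      ring
    exact h2.const_mul (c p)
  -- derivative of ∑ c p * (g * g')
  have dB : ∀ (c : ℕ × ℕ → ℝ), ∀ x ∈ Set.Icc (0:ℝ) 1,
      HasDerivAt (fun y => ∑ p ∈ F, c p * (g p.1 p.2 y * g' p.1 p.2 y))
        (∑ p ∈ F, c p * (g' p.1 p.2 x * g' p.1 p.2 x + g p.1 p.2 x * g'' p.1 p.2 x)) x := by
    intro c x hx
    apply HasDerivAt.fun_sum
    intro p hp
    exact ((hgd p hp x hx).mul (hgd' p hp x hx)).const_mul (c p)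
  -- derivative of ∑ c p * g'²
  have dC : ∀ (c : ℕ × ℕ → ℝ), ∀ x ∈ Set.Icc (0:ℝ) 1,
      HasDerivAt (fun y => ∑ p ∈ F, c p * (g' p.1 p.2 y)^2)
        (∑ p ∈ F, c p * (2 * (g' p.1 p.2 x * g'' p.1 p.2 x))) x := by
    intro c x hx
    apply HasDerivAt.fun_sum
    intro p hp
    have h2 : HasDerivAt (fun y => (g' p.1 p.2 y)^2)
        (2 * (g' p.1 p.2 x * g'' p.1 p.2 x)) x := by
      have := (hgd' p hp x hx).pow 2
      refine this.congr_deriv ?_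
      push_cast
      ring
    exact h2.const_mul (c p)
  have contA : ∀ (c : ℕ × ℕ → ℝ),
      ContinuousOn (fun y => ∑ p ∈ F, c p * (g p.1 p.2 y)^2) (Set.Icc 0 1) :=
    fun c x hx => ((dA c x hx).continuousAt).continuousWithinAt
  have contB : ∀ (c : ℕ × ℕ → ℝ),
      ContinuousOn (fun y => ∑ p ∈ F, c p * (g p.1 p.2 y * g' p.1 p.2 y)) (Set.Icc 0 1) :=
    fun c x hx => ((dB c x hx).continuousAt).continuousWithinAt
  have contC : ∀ (c : ℕ × ℕ → ℝ),
      ContinuousOn (fun y => ∑ p ∈ F, c p * (g' p.1 p.2 y)^2) (Set.Icc 0 1) :=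
    fun c x hx => ((dC c x hx).continuousAt).continuousWithinAt
  -- Step 2: s0 = 0 on Ioo
  have hs0Ioo : ∀ x ∈ Set.Ioo (0:ℝ) 1,
      (∑ p ∈ F, a p * (g p.1 p.2 x * g' p.1 p.2 x)) = 0 := by
    intro x hx
    have hxI : x ∈ Set.Icc (0:ℝ) 1 := Set.Ioo_subset_Icc_self hx
    have hd := dA a x hxI
    have hev : (fun y => ∑ p ∈ F, a p * (g p.1 p.2 y)^2) =ᶠ[𝓝 x] (fun _ => (0:ℝ)) := by
      filter_upwards [Ioo_mem_nhds hx.1 hx.2] with y hy using h0 y (Set.Ioo_subset_Icc_self hy)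
    have hzero : HasDerivAt (fun y => ∑ p ∈ F, a p * (g p.1 p.2 y)^2) 0 x :=
      (hasDerivAt_const x (0:ℝ)).congr_of_eventuallyEq hev
    have huniq := hzero.unique hd
    have h2 : (∑ p ∈ F, a p * (2 * (g p.1 p.2 x * g' p.1 p.2 x)))
        = 2 * ∑ p ∈ F, a p * (g p.1 p.2 x * g' p.1 p.2 x) := by
      rw [Finset.mul_sum]
      exact Finset.sum_congr rfl fun p _ => by ring
    rw [h2] at huniq
    linarith
  -- Step 3: s0 = 0 on Icc
  have hs0 : ∀ x ∈ Set.Icc (0:ℝ) 1,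
      (∑ p ∈ F, a p * (g p.1 p.2 x * g' p.1 p.2 x)) = 0 :=
    eqOn_Icc_of_eqOn_Ioo (contB a) continuousOn_const hs0Ioo
  -- Step 4: h0f = f1 on Ioo
  have hCfIoo : ∀ x ∈ Set.Ioo (0:ℝ) 1,
      (∑ p ∈ F, a p * (g' p.1 p.2 x)^2)
        = ∑ p ∈ F, (a p * lam p.1 p.2) * (g p.1 p.2 x)^2 := by
    intro x hx
    have hxI : x ∈ Set.Icc (0:ℝ) 1 := Set.Ioo_subset_Icc_self hx
    have hd := dB a x hxI
    have hev : (fun y => ∑ p ∈ F, a p * (g p.1 p.2 y * g' p.1 p.2 y)) =ᶠ[𝓝 x]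
        (fun _ => (0:ℝ)) := by
      filter_upwards [Ioo_mem_nhds hx.1 hx.2] with y hy using hs0Ioo y hy
    have hzero : HasDerivAt (fun y => ∑ p ∈ F, a p * (g p.1 p.2 y * g' p.1 p.2 y)) 0 x :=
      (hasDerivAt_const x (0:ℝ)).congr_of_eventuallyEq hev
    have huniq := hzero.unique hd
    have hval : (∑ p ∈ F, a p * (g' p.1 p.2 x * g' p.1 p.2 x + g p.1 p.2 x * g'' p.1 p.2 x))
        = (∑ p ∈ F, a p * (g' p.1 p.2 x)^2) + q x * (∑ p ∈ F, a p * (g p.1 p.2 x)^2)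
          - (∑ p ∈ F, (a p * lam p.1 p.2) * (g p.1 p.2 x)^2) := by
      rw [Finset.mul_sum, ← Finset.sum_add_distrib, ← Finset.sum_sub_distrib]
      refine Finset.sum_congr rfl fun p hp => ?_
      rw [hode p hp x hxI]
      ring
    rw [hval, h0 x hxI, mul_zero, add_zero] at huniq
    linarith
  -- Step 5: h0f = f1 on Icc
  have hCf : ∀ x ∈ Set.Icc (0:ℝ) 1,
      (∑ p ∈ F, a p * (g' p.1 p.2 x)^2)
        = ∑ p ∈ F, (a p * lam p.1 p.2) * (g p.1 p.2 x)^2 :=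
    eqOn_Icc_of_eqOn_Ioo (contC a) (contA (fun p => a p * lam p.1 p.2)) hCfIoo
  -- Step 6: s1 = 0 on Ioo
  have hs1Ioo : ∀ x ∈ Set.Ioo (0:ℝ) 1,
      (∑ p ∈ F, (a p * lam p.1 p.2) * (g p.1 p.2 x * g' p.1 p.2 x)) = 0 := by
    intro x hx
    have hxI : x ∈ Set.Icc (0:ℝ) 1 := Set.Ioo_subset_Icc_self hx
    have hdC := dC a x hxI
    have hdA1 := dA (fun p => a p * lam p.1 p.2) x hxI
    have hev : (fun y => ∑ p ∈ F, a p * (g' p.1 p.2 y)^2) =ᶠ[𝓝 x]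
        (fun y => ∑ p ∈ F, (a p * lam p.1 p.2) * (g p.1 p.2 y)^2) := by
      filter_upwards [Ioo_mem_nhds hx.1 hx.2] with y hy using hCfIoo y hy
    have hdC' : HasDerivAt (fun y => ∑ p ∈ F, (a p * lam p.1 p.2) * (g p.1 p.2 y)^2)
        (∑ p ∈ F, a p * (2 * (g' p.1 p.2 x * g'' p.1 p.2 x))) x :=
      hdC.congr_of_eventuallyEq hev.symm
    have huniq := hdC'.unique hdA1
    have hL : (∑ p ∈ F, a p * (2 * (g' p.1 p.2 x * g'' p.1 p.2 x)))
        = 2 * q x * (∑ p ∈ F, a p * (g p.1 p.2 x * g' p.1 p.2 x))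
          - 2 * (∑ p ∈ F, (a p * lam p.1 p.2) * (g p.1 p.2 x * g' p.1 p.2 x)) := by
      rw [Finset.mul_sum, Finset.mul_sum, ← Finset.sum_sub_distrib]
      refine Finset.sum_congr rfl fun p hp => ?_
      rw [hode p hp x hxI]
      ring
    have hR : (∑ p ∈ F, (a p * lam p.1 p.2) * (2 * (g p.1 p.2 x * g' p.1 p.2 x)))
        = 2 * (∑ p ∈ F, (a p * lam p.1 p.2) * (g p.1 p.2 x * g' p.1 p.2 x)) := by
      rw [Finset.mul_sum]
      exact Finset.sum_congr rfl fun p _ => by ring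
    rw [hL, hR, hs0Ioo x hx, mul_zero] at huniq
    linarith
  -- Step 7: s1 = 0 on Icc
  have hs1 : ∀ x ∈ Set.Icc (0:ℝ) 1,
      (∑ p ∈ F, (a p * lam p.1 p.2) * (g p.1 p.2 x * g' p.1 p.2 x)) = 0 :=
    eqOn_Icc_of_eqOn_Ioo (contB (fun p => a p * lam p.1 p.2)) continuousOn_const hs1Ioo
  -- Step 8: f1 constant
  have hconst : ∀ x ∈ Set.Icc (0:ℝ) 1,
      (∑ p ∈ F, (a p * lam p.1 p.2) * (g p.1 p.2 x)^2)
        = ∑ p ∈ F, (a p * lam p.1 p.2) * (g p.1 p.2 0)^2 := by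
    apply constant_of_has_deriv_right_zero (contA (fun p => a p * lam p.1 p.2))
    intro x hx
    have hxI : x ∈ Set.Icc (0:ℝ) 1 := Set.Ico_subset_Icc_self hx
    have hd := dA (fun p => a p * lam p.1 p.2) x hxI
    have hval : (∑ p ∈ F, (a p * lam p.1 p.2) * (2 * (g p.1 p.2 x * g' p.1 p.2 x))) = 0 := by
      have h2 : (∑ p ∈ F, (a p * lam p.1 p.2) * (2 * (g p.1 p.2 x * g' p.1 p.2 x)))
          = 2 * (∑ p ∈ F, (a p * lam p.1 p.2) * (g p.1 p.2 x * g' p.1 p.2 x)) := by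
        rw [Finset.mul_sum]
        exact Finset.sum_congr rfl fun p _ => by ring
      rw [h2, hs1 x hxI, mul_zero]
    rw [hval] at hd
    exact hd.hasDerivWithinAt
  -- Step 9: f1 0 = 0
  have h00 : (0:ℝ) ∈ Set.Icc (0:ℝ) 1 := by constructor <;> norm_num
  have hA10 : (∑ p ∈ F, (a p * lam p.1 p.2) * (g p.1 p.2 0)^2) = 0 := by
    by_cases hsα : Real.sin α = 0
    · apply Finset.sum_eq_zero
      intro p hp
      have hbc := hbc0 p.1 (hF p hp) p.2
      have hcos : Real.cos α ≠ 0 := by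
        intro h
        have := Real.sin_sq_add_cos_sq α
        rw [hsα, h] at this
        norm_num at this
      have hg0 : g p.1 p.2 0 = 0 := by
        rw [hsα, mul_zero, add_zero] at hbc
        exact (mul_eq_zero.1 hbc).resolve_right hcos
      rw [hg0]
      ring
    · have h5 := (hCf 0 h00).symm
      rw [h5]
      have hkey : (∑ p ∈ F, a p * (g' p.1 p.2 0)^2)
          = (Real.cos α / Real.sin α)^2 * (∑ p ∈ F, a p * (g p.1 p.2 0)^2) := by
        rw [Finset.mul_sum]
        refine Finset.sum_congr rfl fun p hp => ?_
        have hbc := hbc0 p.1 (hF p hp) p.2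
        have hg' : g' p.1 p.2 0 = -(g p.1 p.2 0 * Real.cos α) / Real.sin α := by
          field_simp
          linarith
        rw [hg']
        field_simp
      rw [hkey, h0 0 h00, mul_zero]
  -- conclusion
  intro x hx
  rw [hconst x hx, hA10]

/-- The squared `L²`-normalized eigenfunctions `g_{i,n}²` of the two Sturm–Liouville
boundary value problems (angles `(α,β)` for `i = 1` and `(α,γ)` for `i = 2`, with
`sin(β − γ) ≠ 0`) are linearly independent: any finite linear combination vanishing
identically on `[0,1]` has all coefficients zero. -/
theorem squared_eigenfunctions_linearly_independent
    (q : ℝ → ℝ) (hq : ContinuousOn q (Set.Icc (0:ℝ) 1))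
    (α β γ : ℝ) (hβγ : Real.sin (β - γ) ≠ 0)
    (lam : ℕ → ℕ → ℝ)
    (hinj1 : Function.Injective (lam 1)) (hinj2 : Function.Injective (lam 2))
    (g g' g'' : ℕ → ℕ → ℝ → ℝ)
    (hg : ∀ i ∈ ({1, 2} : Set ℕ), ∀ n : ℕ, ∀ x ∈ Set.Icc (0:ℝ) 1,
      HasDerivAt (g i n) (g' i n x) x ∧ HasDerivAt (g' i n) (g'' i n x) x)
    (hg'' : ∀ i ∈ ({1, 2} : Set ℕ), ∀ n : ℕ, ContinuousOn (g'' i n) (Set.Icc (0:ℝ) 1))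
    (hne : ∀ i ∈ ({1, 2} : Set ℕ), ∀ n : ℕ, ∃ x ∈ Set.Icc (0:ℝ) 1, g i n x ≠ 0)
    (heq : ∀ i ∈ ({1, 2} : Set ℕ), ∀ n : ℕ, ∀ x ∈ Set.Icc (0:ℝ) 1,
      -g'' i n x + q x * g i n x = lam i n * g i n x)
    (hnorm : ∀ i ∈ ({1, 2} : Set ℕ), ∀ n : ℕ, (∫ x in (0:ℝ)..1, (g i n x)^2) = 1)
    (hbc0 : ∀ i ∈ ({1, 2} : Set ℕ), ∀ n : ℕ,
      g i n 0 * Real.cos α + g' i n 0 * Real.sin α = 0)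
    (hbc1β : ∀ n : ℕ, g 1 n 1 * Real.cos β + g' 1 n 1 * Real.sin β = 0)
    (hbc1γ : ∀ n : ℕ, g 2 n 1 * Real.cos γ + g' 2 n 1 * Real.sin γ = 0) :
    ∀ F : Finset (ℕ × ℕ), (∀ p ∈ F, p.1 ∈ ({1, 2} : Set ℕ)) →
      ∀ a : ℕ × ℕ → ℝ,
        (∀ x ∈ Set.Icc (0:ℝ) 1, ∑ p ∈ F, a p * (g p.1 p.2 x)^2 = 0) →
        ∀ p ∈ F, a p = 0 := by
  classical
  have hdist := distinct_lam q hq α β γ hβγ lam g g' g'' hg hne heq hbc0 hbc1β hbc1γ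
  intro F
  induction F using Finset.strongInduction with
  | _ F IH =>
    intro hF a ha p hp
    have hchain := chain_lemma q α lam g g' g'' hg heq hbc0 F hF a ha
    have hF' : ∀ r ∈ F.erase p, r.1 ∈ ({1, 2} : Set ℕ) :=
      fun r hr => hF r (Finset.mem_of_mem_erase hr)
    -- the reduced linear combination vanishes
    have hb : ∀ x ∈ Set.Icc (0:ℝ) 1,
        ∑ r ∈ F.erase p, (a r * (lam r.1 r.2 - lam p.1 p.2)) * (g r.1 r.2 x)^2 = 0 := by
      intro x hx
      have e1 := hchain x hx
      have e0 := ha x hx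
      have d1 : (∑ r ∈ F.erase p, (a r * lam r.1 r.2) * (g r.1 r.2 x)^2)
          = (∑ r ∈ F, (a r * lam r.1 r.2) * (g r.1 r.2 x)^2)
            - (a p * lam p.1 p.2) * (g p.1 p.2 x)^2 :=
        Finset.sum_erase_eq_sub hp
      have d0 : (∑ r ∈ F.erase p, a r * (g r.1 r.2 x)^2)
          = (∑ r ∈ F, a r * (g r.1 r.2 x)^2) - a p * (g p.1 p.2 x)^2 :=
        Finset.sum_erase_eq_sub hp
      calc (∑ r ∈ F.erase p, (a r * (lam r.1 r.2 - lam p.1 p.2)) * (g r.1 r.2 x)^2)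
          = (∑ r ∈ F.erase p, (a r * lam r.1 r.2) * (g r.1 r.2 x)^2)
            - lam p.1 p.2 * (∑ r ∈ F.erase p, a r * (g r.1 r.2 x)^2) := by
            rw [Finset.mul_sum, ← Finset.sum_sub_distrib]
            exact Finset.sum_congr rfl fun r _ => by ring
        _ = 0 := by rw [d1, d0, e1, e0]; ring
    have hzeros : ∀ r ∈ F.erase p, a r = 0 := by
      intro r hr
      have hb0 := IH (F.erase p) (Finset.erase_ssubset hp) hF'
        (fun r => a r * (lam r.1 r.2 - lam p.1 p.2)) hb r hr
      have hrp : r ≠ p := Finset.ne_of_mem_erase hr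
      have hlne : lam r.1 r.2 ≠ lam p.1 p.2 := by
        have hr1 := hF' r hr
        have hp1 := hF p hp
        simp only [Set.mem_insert_iff, Set.mem_singleton_iff] at hr1 hp1
        rcases hr1 with h | h <;> rcases hp1 with h' | h'
        · rw [h, h']
          intro hEq
          exact hrp (Prod.ext (h.trans h'.symm) (hinj1 hEq))
        · rw [h, h']
          exact hdist r.2 p.2
        · rw [h, h']
          exact (hdist p.2 r.2).symm
        · rw [h, h']
          intro hEq
          exact hrp (Prod.ext (h.trans h'.symm) (hinj2 hEq))
      rcases mul_eq_zero.1 hb0 with h | h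
      · exact h
      · exact absurd (sub_eq_zero.1 h) hlne
    obtain ⟨x₀, hx₀, hnz⟩ := hne p.1 (hF p hp) p.2
    have hsum := ha x₀ hx₀
    rw [← Finset.sum_erase_add F _ hp] at hsum
    have hz : (∑ r ∈ F.erase p, a r * (g r.1 r.2 x₀)^2) = 0 :=
      Finset.sum_eq_zero fun r hr => by rw [hzeros r hr, zero_mul]
    rw [hz, zero_add] at hsum
    exact (mul_eq_zero.1 hsum).resolve_right (pow_ne_zero 2 hnz)
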